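/- For every positive integer d, the multiple t-value t(2,2,...,2) with d repetitions of 2 equals π^{2d}/(2^{2d} (2d)!). -/

import Mathlib

set_option maxHeartbeats 1000000


/-- The multiple zeta value `ζ(s₁,…,s_l) = ∑_{1 ≤ k₁ < ⋯ < k_l} ∏ 1/kᵢ^{sᵢ}`. -/
noncomputable def MZV (s : List ℕ) : ℝ :=
  ∑' f : {f : Fin s.length → ℕ+ // StrictMono f},
    ∏ i : Fin s.length, (1 : ℝ) / ((f.1 i : ℕ) : ℝ) ^ s.get i

/-- The multiple t-value `t(s₁,…,s_l) = ∑_{1 ≤ k₁ < ⋯ < k_l} ∏ 1/(2kᵢ-1)^{sᵢ}`. -/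
noncomputable def MTV (s : List ℕ) : ℝ :=
  ∑' f : {f : Fin s.length → ℕ+ // StrictMono f},
    ∏ i : Fin s.length, (1 : ℝ) / ((2 * (f.1 i : ℕ) - 1 : ℕ) : ℝ) ^ s.get i

open Filter Finset Topology Real

namespace Stmt5

/-- `aa k = 1/(2k+1)^2`. -/
noncomputable def aa (k : ℕ) : ℝ := 1 / (2 * (k : ℝ) + 1) ^ 2

lemma aa_nonneg (k : ℕ) : 0 ≤ aa k := by unfold aa; positivity

lemma aa_summable : Summable aa := by
  have h0 : Summable (fun n : ℕ => 1 / (n : ℝ) ^ 2) := summable_one_div_nat_pow.2 one_lt_two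
  have h1 : Summable (fun k : ℕ => 1 / ((k : ℝ) + 1) ^ 2) := by
    have := (summable_nat_add_iff (f := fun n : ℕ => 1 / (n : ℝ) ^ 2) 1).2 h0
    simpa using this
  refine Summable.of_nonneg_of_le (fun k => aa_nonneg k) (fun k => ?_) h1
  unfold aa
  have hk : (0:ℝ) ≤ (k:ℝ) := Nat.cast_nonneg k
  apply one_div_le_one_div_of_le (by positivity)
  nlinarith

lemma sum_powerset (b : ℕ → ℝ) (n : ℕ) :
    ∑ S ∈ (Finset.range n).powerset, ∏ k ∈ S, b k = ∏ k ∈ Finset.range n, (1 + b k) := by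
  have h := Finset.prod_add b (fun _ => (1:ℝ)) (Finset.range n)
  simp only [Finset.prod_const_one, mul_one] at h
  rw [← h]
  exact Finset.prod_congr rfl fun k _ => by ring

lemma summable_prod_finset {b : ℕ → ℝ} (hb0 : ∀ k, 0 ≤ b k) (hb : Summable b) :
    Summable (fun S : Finset ℕ => ∏ k ∈ S, b k) := by
  apply summable_of_sum_le (c := Real.exp (∑' k, b k))
    (fun S => Finset.prod_nonneg fun k _ => hb0 k)
  intro u
  set n := (u.sup id).sup Nat.succ with hn
  have hmem : ∀ S ∈ u, S ∈ (Finset.range n).powerset := by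
    intro S hS
    rw [Finset.mem_powerset]
    intro k hk
    have h1 : S ≤ u.sup id := Finset.le_sup (f := id) hS
    have h2 : k ∈ u.sup id := h1 hk
    have h3 : Nat.succ k ≤ (u.sup id).sup Nat.succ := Finset.le_sup (f := Nat.succ) h2
    exact Finset.mem_range.2 h3
  calc ∑ S ∈ u, ∏ k ∈ S, b k
      ≤ ∑ S ∈ (Finset.range n).powerset, ∏ k ∈ S, b k :=
        Finset.sum_le_sum_of_subset_of_nonneg hmem
          (fun S _ _ => Finset.prod_nonneg fun k _ => hb0 k)
    _ = ∏ k ∈ Finset.range n, (1 + b k) := sum_powerset b n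
    _ ≤ ∏ k ∈ Finset.range n, Real.exp (b k) := by
        apply Finset.prod_le_prod (fun k _ => by have := hb0 k; linarith)
          (fun k _ => by have := Real.add_one_le_exp (b k); linarith)
    _ = Real.exp (∑ k ∈ Finset.range n, b k) := (Real.exp_sum _ _).symm
    _ ≤ Real.exp (∑' k, b k) :=
        Real.exp_le_exp.2 (Summable.sum_le_tsum _ (fun k _ => hb0 k) hb)

lemma tendsto_prod_tsum {b : ℕ → ℝ} (hb : Summable (fun S : Finset ℕ => ∏ k ∈ S, b k)) :
    Tendsto (fun n => ∏ k ∈ Finset.range n, (1 + b k)) atTop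
      (𝓝 (∑' S : Finset ℕ, ∏ k ∈ S, b k)) := by
  have h1 : Tendsto (fun n : ℕ => (Finset.range n).powerset) atTop atTop := by
    apply tendsto_atTop_finset_of_monotone
    · intro m n hmn
      exact Finset.powerset_mono.2 (Finset.range_subset_range.2 hmn)
    · intro S
      refine ⟨S.sup Nat.succ, Finset.mem_powerset.2 fun k hk => ?_⟩
      exact Finset.mem_range.2 (Finset.le_sup (f := Nat.succ) hk)
  exact (hb.hasSum.comp h1).congr fun n => sum_powerset b n

/-- elementary symmetric sums of the `aa k`. -/
noncomputable def ee (d : ℕ) : ℝ :=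
  ∑' S : {S : Finset ℕ // S.card = d}, ∏ k ∈ (S : Finset ℕ), aa k

lemma summable_inner (d : ℕ) :
    Summable (fun S : {S : Finset ℕ // S.card = d} => ∏ k ∈ (S : Finset ℕ), aa k) :=
  (summable_prod_finset aa_nonneg aa_summable).subtype _

lemma ee_nonneg (d : ℕ) : 0 ≤ ee d :=
  tsum_nonneg fun S => Finset.prod_nonneg fun k _ => aa_nonneg k

lemma summable_G (y : ℝ) : Summable (fun S : Finset ℕ => ∏ k ∈ S, (y * aa k)) := by
  have habs : Summable (fun S : Finset ℕ => ∏ k ∈ S, (|y| * aa k)) :=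
    summable_prod_finset (fun k => mul_nonneg (abs_nonneg y) (aa_nonneg k))
      (aa_summable.mul_left _)
  apply Summable.of_norm
  refine habs.congr fun S => ?_
  rw [Real.norm_eq_abs, Finset.abs_prod]
  exact Finset.prod_congr rfl fun k _ => by
    rw [abs_mul, abs_of_nonneg (aa_nonneg k)]

lemma gen_fun (y : ℝ) :
    Summable (fun d : ℕ => ee d * y ^ d) ∧
      ∑' d : ℕ, ee d * y ^ d = ∑' S : Finset ℕ, ∏ k ∈ S, (y * aa k) := by
  have hG : Summable (fun S : Finset ℕ => ∏ k ∈ S, (y * aa k)) := summable_G y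
  set σ : (Σ d : ℕ, {S : Finset ℕ // S.card = d}) ≃ Finset ℕ :=
    Equiv.sigmaFiberEquiv Finset.card with hσdef
  have hσ : Summable (fun p : Σ d : ℕ, {S : Finset ℕ // S.card = d} =>
      ∏ k ∈ (p.2 : Finset ℕ), (y * aa k)) := by
    have h := (Equiv.summable_iff σ).2 hG
    exact h
  have key : ∀ (d : ℕ) (S : {S : Finset ℕ // S.card = d}),
      ∏ k ∈ (S : Finset ℕ), (y * aa k) = y ^ d * ∏ k ∈ (S : Finset ℕ), aa k := by
    intro d S
    rw [Finset.prod_mul_distrib, Finset.prod_const, S.2]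
  have inner_eq : ∀ d : ℕ,
      (∑' S : {S : Finset ℕ // S.card = d}, ∏ k ∈ (S : Finset ℕ), (y * aa k)) =
        ee d * y ^ d := by
    intro d
    rw [tsum_congr (key d), tsum_mul_left]
    unfold ee; ring
  constructor
  · exact hσ.sigma.congr inner_eq
  · have h1 : ∑' S : Finset ℕ, ∏ k ∈ S, (y * aa k) =
        ∑' p : Σ d : ℕ, {S : Finset ℕ // S.card = d},
          ∏ k ∈ (p.2 : Finset ℕ), (y * aa k) := (Equiv.tsum_eq σ _).symm
    rw [h1, Summable.tsum_sigma hσ]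
    exact (tsum_congr inner_eq).symm

lemma tendsto_cos_prod {x : ℝ} (hx0 : 0 < x) (hx1 : x < 1) :
    Tendsto (fun n => ∏ k ∈ Finset.range n, (1 + (-(x^2)) * aa k)) atTop
      (𝓝 (Real.cos (π * x / 2))) := by
  have hpi := Real.pi_pos
  have hπx : (π * x) ≠ 0 := by positivity
  have hπx2 : (π * (x/2)) ≠ 0 := by positivity
  have hs2 : 0 < Real.sin (π * (x / 2)) := by
    apply Real.sin_pos_of_pos_of_lt_pi (by positivity)
    nlinarith
  have h1 := Real.tendsto_euler_sin_prod x
  have h2 := Real.tendsto_euler_sin_prod (x / 2)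
  have hA : Tendsto (fun n => ∏ j ∈ Finset.range n, ((1:ℝ) - x^2/((j:ℝ)+1)^2)) atTop
      (𝓝 (Real.sin (π * x) / (π * x))) := by
    have h := h1.div_const (π * x)
    refine h.congr fun n => ?_
    exact mul_div_cancel_left₀ _ hπx
  have hB : Tendsto (fun n => ∏ j ∈ Finset.range n, ((1:ℝ) - (x/2)^2/((j:ℝ)+1)^2)) atTop
      (𝓝 (Real.sin (π * (x/2)) / (π * (x/2)))) := by
    have h := h2.div_const (π * (x/2))
    refine h.congr fun n => ?_
    exact mul_div_cancel_left₀ _ hπx2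
  have h2n : Tendsto (fun n : ℕ => 2 * n) atTop atTop :=
    tendsto_atTop_atTop_of_monotone (fun a b h => by omega) (fun b => ⟨b, by omega⟩)
  have hA2 : Tendsto (fun n => ∏ j ∈ Finset.range (2*n), ((1:ℝ) - x^2/((j:ℝ)+1)^2)) atTop
      (𝓝 (Real.sin (π * x) / (π * x))) := hA.comp h2n
  have hsplit : ∀ n : ℕ,
      (∏ j ∈ Finset.range (2*n), ((1:ℝ) - x^2/((j:ℝ)+1)^2)) =
        (∏ k ∈ Finset.range n, (1 + (-(x^2)) * aa k)) *
          (∏ j ∈ Finset.range n, ((1:ℝ) - (x/2)^2/((j:ℝ)+1)^2)) := by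
    intro n
    induction n with
    | zero => simp
    | succ m ih =>
      have e1 : 2 * (m + 1) = (2 * m) + 1 + 1 := by ring
      rw [e1, Finset.prod_range_succ, Finset.prod_range_succ,
        Finset.prod_range_succ, Finset.prod_range_succ, ih]
      have hm1 : ((2*m : ℕ) : ℝ) = 2 * (m : ℝ) := by push_cast; ring
      have hm2 : ((2*m + 1 : ℕ) : ℝ) = 2 * (m : ℝ) + 1 := by push_cast; ring
      unfold aa
      have d1 : (2 * (m:ℝ) + 1) ≠ 0 := by positivity
      have d2 : (2 * (m:ℝ) + 2) ≠ 0 := by positivity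
      have d3 : ((m:ℝ) + 1) ≠ 0 := by positivity
      rw [hm1, hm2]
      field_simp
      ring
  have hBpos : ∀ n : ℕ, 0 < ∏ j ∈ Finset.range n, ((1:ℝ) - (x/2)^2/((j:ℝ)+1)^2) := by
    intro n
    apply Finset.prod_pos
    intro j _
    have hj : (1:ℝ) ≤ ((j:ℝ)+1)^2 := by
      have : (0:ℝ) ≤ (j:ℝ) := Nat.cast_nonneg j
      nlinarith
    have hx2 : (x/2)^2 < 1 := by nlinarith
    have : (x/2)^2/((j:ℝ)+1)^2 ≤ (x/2)^2 := by
      apply div_le_of_le_mul₀ ?_ (by positivity) ?_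
      · nlinarith
      · nlinarith
    linarith
  have hL2 : Real.sin (π * (x/2)) / (π * (x/2)) ≠ 0 := by
    apply div_ne_zero (ne_of_gt hs2) hπx2
  have hquot := hA2.div hB hL2
  have hO : (fun n => ∏ k ∈ Finset.range n, (1 + (-(x^2)) * aa k)) =
      fun n => (∏ j ∈ Finset.range (2*n), ((1:ℝ) - x^2/((j:ℝ)+1)^2)) /
        (∏ j ∈ Finset.range n, ((1:ℝ) - (x/2)^2/((j:ℝ)+1)^2)) := by
    funext n
    rw [eq_div_iff (ne_of_gt (hBpos n))]
    exact (hsplit n).symm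
  rw [hO]
  convert hquot using 2
  · rfl
  have hsin : Real.sin (π * x) = 2 * Real.sin (π * x / 2) * Real.cos (π * x / 2) := by
    have h := Real.sin_two_mul (π * x / 2)
    rw [show 2 * (π * x / 2) = π * x by ring] at h
    exact h
  have hs2' : Real.sin (π * x / 2) ≠ 0 := by
    rw [show π * x / 2 = π * (x/2) by ring]; exact ne_of_gt hs2
  rw [show π * (x/2) = π * x / 2 by ring]
  rw [hsin]
  field_simp

lemma sum_eq_cos {x : ℝ} (hx0 : 0 < x) (hx1 : x < 1) :
    ∑' d : ℕ, ee d * (-(x^2)) ^ d = Real.cos (π * x / 2) := by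
  obtain ⟨hsum, heq⟩ := gen_fun (-(x^2))
  rw [heq]
  exact tendsto_nhds_unique (tendsto_prod_tsum (summable_G _)) (tendsto_cos_prod hx0 hx1)

/-- the cosine coefficients. -/
noncomputable def cc (n : ℕ) : ℝ := (π/2)^(2*n) / (Nat.factorial (2*n) : ℝ)

lemma cc_nonneg (n : ℕ) : 0 ≤ cc n := by
  unfold cc
  positivity

lemma cc_summable : Summable cc := by
  refine Summable.of_nonneg_of_le (fun n => cc_nonneg n) (fun n => ?_)
    (Real.summable_pow_div_factorial ((π/2)^2))
  unfold cc
  rw [pow_mul]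
  apply div_le_div_of_nonneg_left (by positivity)
    (by exact_mod_cast Nat.factorial_pos n)
  exact_mod_cast Nat.factorial_le (by omega)

lemma cos_series {y : ℝ} (hy : y ≤ 0) :
    Real.cos (π * Real.sqrt (-y) / 2) = ∑' n : ℕ, cc n * y ^ n := by
  rw [Real.cos_eq_tsum]
  apply tsum_congr
  intro n
  have hx : (Real.sqrt (-y))^2 = -y := Real.sq_sqrt (by linarith)
  have h1 : ((-1:ℝ))^n * ((-1:ℝ))^n = 1 := by
    rw [← pow_add]
    exact Even.neg_one_pow ⟨n, rfl⟩
  rw [show π * Real.sqrt (-y) / 2 = (π/2) * Real.sqrt (-y) by ring,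
    mul_pow, pow_mul (Real.sqrt (-y)), hx]
  unfold cc
  rw [show -y = -1 * y by ring, mul_pow]
  calc (-1:ℝ)^n * ((π/2)^(2*n) * ((-1:ℝ)^n * y^n)) / ((Nat.factorial (2*n) : ℝ)) =
      ((-1:ℝ)^n * (-1:ℝ)^n) * ((π/2)^(2*n) * y^n) / ((Nat.factorial (2*n) : ℝ)) := by ring
    _ = (π/2)^(2*n) / (Nat.factorial (2*n) : ℝ) * y^n := by rw [h1]; ring

lemma coeff_eq_zero {c : ℕ → ℝ} (hc : Summable fun n => |c n| * (2⁻¹ : ℝ)^n)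
    (h : ∀ y : ℝ, -(2⁻¹:ℝ) < y → y < 0 → ∑' n : ℕ, c n * y ^ n = 0) : ∀ m, c m = 0 := by
  have hsum : ∀ (k : ℕ) (y : ℝ), |y| ≤ 2⁻¹ → Summable (fun n => c (n + k) * y ^ n) := by
    intro k y hy
    apply Summable.of_norm
    have h1 : Summable (fun n => |c (n + k)| * (2⁻¹:ℝ)^(n+k)) :=
      (summable_nat_add_iff k).2 hc
    have h2 := h1.mul_right ((2:ℝ)^k)
    have h3 : Summable (fun n => |c (n + k)| * (2⁻¹:ℝ)^n) := by
      refine h2.congr fun n => ?_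
      have hpk : (2⁻¹:ℝ)^k * 2^k = 1 := by rw [← mul_pow]; norm_num
      rw [pow_add]
      calc |c (n+k)| * ((2⁻¹:ℝ)^n * 2⁻¹^k) * 2^k
          = |c (n+k)| * (2⁻¹:ℝ)^n * ((2⁻¹:ℝ)^k * 2^k) := by ring
        _ = |c (n+k)| * (2⁻¹:ℝ)^n := by rw [hpk, mul_one]
    refine Summable.of_nonneg_of_le (fun n => norm_nonneg _) (fun n => ?_) h3
    rw [Real.norm_eq_abs, abs_mul, abs_pow]
    exact mul_le_mul_of_nonneg_left (pow_le_pow_left₀ (abs_nonneg y) hy n) (abs_nonneg _)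
  intro m
  induction m using Nat.strong_induction_on with
  | _ m ih =>
  have tail0 : ∀ y : ℝ, -(2⁻¹:ℝ) < y → y < 0 → ∑' n : ℕ, c (n + m) * y ^ n = 0 := by
    intro y hy1 hy2
    have hy : |y| ≤ 2⁻¹ := by rw [abs_of_neg hy2]; linarith
    have hS := hsum 0 y hy
    simp only [Nat.add_zero] at hS
    have h0 := h y hy1 hy2
    have hsplit := Summable.sum_add_tsum_nat_add (f := fun n => c n * y ^ n) m hS
    have hfin : ∑ i ∈ Finset.range m, c i * y ^ i = 0 :=
      Finset.sum_eq_zero fun i hi => by rw [ih i (Finset.mem_range.1 hi)]; ring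
    have htail : ∑' i : ℕ, c (i + m) * y ^ (i + m) = 0 := by
      rw [h0] at hsplit
      rw [hfin] at hsplit
      linarith
    have hmul : (∑' i : ℕ, c (i + m) * y ^ i) * y ^ m = 0 := by
      rw [← tsum_mul_right, ← htail]
      exact tsum_congr fun i => by rw [pow_add]; ring
    have hym : y ^ m ≠ 0 := pow_ne_zero m (ne_of_lt hy2)
    exact (mul_eq_zero.1 hmul).resolve_right hym
  -- K bound
  have hKsum : Summable (fun n => |c (n + 1 + m)| * (2⁻¹:ℝ)^n) := by
    have := (summable_nat_add_iff (m+1)).2 hc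
    have h2 := this.mul_right ((2:ℝ)^(m+1))
    refine h2.congr fun n => ?_
    have hpk : (2⁻¹:ℝ)^(m+1) * 2^(m+1) = 1 := by rw [← mul_pow]; norm_num
    rw [show n + (m+1) = n + 1 + m by omega]
    have hee : (2⁻¹:ℝ)^(n+1+m) = 2⁻¹^n * 2⁻¹^(m+1) := by
      rw [← pow_add]; congr 1; omega
    rw [hee]
    calc |c (n+1+m)| * ((2⁻¹:ℝ)^n * 2⁻¹^(m+1)) * 2^(m+1)
        = |c (n+1+m)| * (2⁻¹:ℝ)^n * ((2⁻¹:ℝ)^(m+1) * 2^(m+1)) := by ring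
      _ = |c (n+1+m)| * (2⁻¹:ℝ)^n := by rw [hpk, mul_one]
  set K := ∑' n : ℕ, |c (n + 1 + m)| * (2⁻¹:ℝ)^n with hKdef
  have hbound : ∀ y : ℝ, -(2⁻¹:ℝ) < y → y < 0 → |c m| ≤ |y| * K := by
    intro y hy1 hy2
    have hy : |y| ≤ 2⁻¹ := by rw [abs_of_neg hy2]; linarith
    have hS : Summable (fun n => c (n + m) * y ^ n) := hsum m y hy
    have hsplit := Summable.sum_add_tsum_nat_add (f := fun n => c (n + m) * y ^ n) 1 hS
    rw [tail0 y hy1 hy2] at hsplit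
    simp only [Finset.range_one, Finset.sum_singleton, Nat.zero_add, pow_zero, mul_one] at hsplit
    have h1 : c m + ∑' i : ℕ, c (i + 1 + m) * y ^ (i + 1) = 0 := by
      rw [← hsplit]
    have h2 : |c m| = |∑' i : ℕ, c (i + 1 + m) * y ^ (i + 1)| := by
      have : c m = -(∑' i : ℕ, c (i + 1 + m) * y ^ (i + 1)) := by linarith
      rw [this, abs_neg]
    have hnormsum : Summable (fun i : ℕ => ‖c (i + 1 + m) * y ^ (i + 1)‖) := by
      refine Summable.of_nonneg_of_le (fun n => norm_nonneg _) (fun n => ?_)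
        (hKsum.mul_left |y|)
      rw [Real.norm_eq_abs, abs_mul, abs_pow, pow_succ']
      calc |c (n + 1 + m)| * (|y| * |y| ^ n) = |y| * (|c (n + 1 + m)| * |y| ^ n) := by ring
        _ ≤ |y| * (|c (n + 1 + m)| * (2⁻¹:ℝ)^n) := by
            apply mul_le_mul_of_nonneg_left ?_ (abs_nonneg y)
            exact mul_le_mul_of_nonneg_left (pow_le_pow_left₀ (abs_nonneg y) hy n) (abs_nonneg _)
    calc |c m| = |∑' i : ℕ, c (i + 1 + m) * y ^ (i + 1)| := h2
      _ ≤ ∑' i : ℕ, ‖c (i + 1 + m) * y ^ (i + 1)‖ := norm_tsum_le_tsum_norm hnormsum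
      _ ≤ ∑' i : ℕ, |y| * (|c (i + 1 + m)| * (2⁻¹:ℝ)^i) := by
          apply Summable.tsum_le_tsum ?_ hnormsum (hKsum.mul_left |y|)
          intro n
          rw [Real.norm_eq_abs, abs_mul, abs_pow, pow_succ']
          calc |c (n + 1 + m)| * (|y| * |y| ^ n) = |y| * (|c (n + 1 + m)| * |y| ^ n) := by ring
            _ ≤ |y| * (|c (n + 1 + m)| * (2⁻¹:ℝ)^n) := by
                apply mul_le_mul_of_nonneg_left ?_ (abs_nonneg y)
                exact mul_le_mul_of_nonneg_left (pow_le_pow_left₀ (abs_nonneg y) hy n)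
                  (abs_nonneg _)
      _ = |y| * K := tsum_mul_left
  have hjbound : ∀ j : ℕ, |c m| ≤ (2⁻¹:ℝ) / ((j:ℝ) + 2) * K := by
    intro j
    have hj2 : (0:ℝ) < (j:ℝ) + 2 := by positivity
    set y : ℝ := -((2⁻¹:ℝ) / ((j:ℝ) + 2)) with hydef
    have hypos : (0:ℝ) < (2⁻¹:ℝ) / ((j:ℝ) + 2) := by positivity
    have hy2 : y < 0 := by simp only [hydef]; linarith
    have hy1 : -(2⁻¹:ℝ) < y := by
      simp only [hydef, neg_lt_neg_iff]
      rw [div_lt_iff₀ hj2]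
      nlinarith
    have hb := hbound y hy1 hy2
    rwa [abs_of_neg hy2, neg_neg] at hb
  have hseq : Tendsto (fun j : ℕ => (2⁻¹:ℝ) / ((j:ℝ) + 2) * K) atTop (𝓝 0) := by
    have h1 : Tendsto (fun j : ℕ => ((j:ℝ) + 2)) atTop atTop :=
      tendsto_atTop_add_const_right _ _ tendsto_natCast_atTop_atTop
    have h2 : Tendsto (fun j : ℕ => (2⁻¹:ℝ) / ((j:ℝ) + 2)) atTop (𝓝 0) :=
      Tendsto.div_atTop tendsto_const_nhds h1
    have h3 := h2.mul_const K
    simpa using h3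
  have hfinal : |c m| ≤ 0 := ge_of_tendsto' hseq hjbound
  exact abs_eq_zero.1 (le_antisymm hfinal (abs_nonneg _))

lemma ee_eq_cc (d : ℕ) : ee d = cc d := by
  have hzero : ∀ y : ℝ, -(2⁻¹:ℝ) < y → y < 0 →
      ∑' n : ℕ, (ee n - cc n) * y ^ n = 0 := by
    intro y hy1 hy2
    have hye : Summable (fun n : ℕ => ee n * y ^ n) := (gen_fun y).1
    have hyc : Summable (fun n : ℕ => cc n * y ^ n) := by
      apply Summable.of_norm
      refine Summable.of_nonneg_of_le (fun n => norm_nonneg _) (fun n => ?_) cc_summable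
      rw [Real.norm_eq_abs, abs_mul, abs_of_nonneg (cc_nonneg n), abs_pow]
      have hyle : |y| ≤ 1 := by rw [abs_of_neg hy2]; linarith
      calc cc n * |y| ^ n ≤ cc n * 1 := by
            apply mul_le_mul_of_nonneg_left ?_ (cc_nonneg n)
            exact pow_le_one₀ (abs_nonneg y) hyle
        _ = cc n := mul_one _
    have heq : ∑' n : ℕ, (ee n - cc n) * y ^ n =
        (∑' n : ℕ, ee n * y ^ n) - ∑' n : ℕ, cc n * y ^ n := by
      rw [← Summable.tsum_sub hye hyc]
      exact tsum_congr fun n => by ring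
    rw [heq]
    set x : ℝ := Real.sqrt (-y) with hxdef
    have hnegy : (0:ℝ) < -y := by linarith
    have hx0 : 0 < x := Real.sqrt_pos.2 hnegy
    have hx1 : x < 1 := by
      rw [hxdef, show (1:ℝ) = Real.sqrt 1 by rw [Real.sqrt_one]]
      exact Real.sqrt_lt_sqrt (by linarith) (by linarith)
    have hxy : -(x^2) = y := by
      rw [hxdef, Real.sq_sqrt (by linarith)]; ring
    have he : ∑' n : ℕ, ee n * y ^ n = Real.cos (π * x / 2) := by
      rw [← hxy]; exact sum_eq_cos hx0 hx1
    have hcs : ∑' n : ℕ, cc n * y ^ n = Real.cos (π * x / 2) := (cos_series (le_of_lt hy2)).symm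
    rw [he, hcs, sub_self]
  have hc : Summable fun n => |ee n - cc n| * (2⁻¹:ℝ)^n := by
    have h1 : Summable (fun n : ℕ => ee n * (2⁻¹:ℝ)^n) := by
      have := (gen_fun (2⁻¹:ℝ)).1
      refine this.congr fun n => by ring
    refine Summable.of_nonneg_of_le
      (fun n => mul_nonneg (abs_nonneg _) (by positivity)) (fun n => ?_)
      (h1.add cc_summable)
    have habs : |ee n - cc n| ≤ ee n + cc n := by
      have := abs_sub (ee n) (cc n)
      calc |ee n - cc n| ≤ |ee n| + |cc n| := abs_sub _ _
        _ = ee n + cc n := by rw [abs_of_nonneg (ee_nonneg n), abs_of_nonneg (cc_nonneg n)]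
    have hpow1 : ((2⁻¹:ℝ))^n ≤ 1 := pow_le_one₀ (by norm_num) (by norm_num)
    have hpow0 : (0:ℝ) ≤ ((2⁻¹:ℝ))^n := by positivity
    calc |ee n - cc n| * (2⁻¹:ℝ)^n ≤ (ee n + cc n) * (2⁻¹:ℝ)^n :=
          mul_le_mul_of_nonneg_right habs hpow0
      _ = ee n * (2⁻¹:ℝ)^n + cc n * (2⁻¹:ℝ)^n := by ring
      _ ≤ ee n * (2⁻¹:ℝ)^n + cc n := by
          have : cc n * (2⁻¹:ℝ)^n ≤ cc n * 1 := mul_le_mul_of_nonneg_left hpow1 (cc_nonneg n)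
          linarith
  have := coeff_eq_zero hc hzero d
  linarith

/-- The order-preserving parametrization of `d`-subsets by strictly monotone tuples. -/
noncomputable def toSM (d : ℕ) (S : {S : Finset ℕ // S.card = d}) :
    {f : Fin d → ℕ+ // StrictMono f} :=
  ⟨fun i => ⟨S.1.orderEmbOfFin S.2 i + 1, Nat.succ_pos _⟩, by
    intro i j hij
    have h := (S.1.orderEmbOfFin S.2).strictMono hij
    exact (PNat.mk_lt_mk _ _ _ _).2 (Nat.succ_lt_succ h)⟩

lemma toSM_bijective (d : ℕ) : Function.Bijective (toSM d) := by
  constructor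
  · intro S T hST
    have hfun : ∀ i : Fin d, S.1.orderEmbOfFin S.2 i = T.1.orderEmbOfFin T.2 i := by
      intro i
      have h1 : (toSM d S).1 i = (toSM d T).1 i := congrFun (congrArg Subtype.val hST) i
      have h3 : (S.1.orderEmbOfFin S.2 i : ℕ) + 1 = (T.1.orderEmbOfFin T.2 i : ℕ) + 1 :=
        congrArg PNat.val h1
      omega
    apply Subtype.ext
    have hfun' : ⇑(S.1.orderEmbOfFin S.2) = ⇑(T.1.orderEmbOfFin T.2) := funext hfun
    have hrange := congrArg Set.range hfun'
    rw [Finset.range_orderEmbOfFin, Finset.range_orderEmbOfFin] at hrange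
    exact_mod_cast hrange
  · intro f
    set F : Fin d → ℕ := fun i => (f.1 i : ℕ) - 1 with hFdef
    have hFmono : StrictMono F := by
      intro i j hij
      have h1 : f.1 i < f.1 j := f.2 hij
      have h2 : (f.1 i : ℕ) < (f.1 j : ℕ) := (PNat.coe_lt_coe _ _).2 h1
      have h3 : 1 ≤ (f.1 i : ℕ) := (f.1 i).2
      exact Nat.sub_lt_sub_right h3 h2
    set S : Finset ℕ := Finset.image F Finset.univ with hSdef
    have hcard : S.card = d := by
      rw [hSdef, Finset.card_image_of_injective _ hFmono.injective, Finset.card_univ,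
        Fintype.card_fin]
    refine ⟨⟨S, hcard⟩, ?_⟩
    have hFS : ∀ i, F i ∈ S := fun i => Finset.mem_image_of_mem F (Finset.mem_univ i)
    have huniq : F = S.orderEmbOfFin hcard := Finset.orderEmbOfFin_unique hcard hFS hFmono
    apply Subtype.ext
    funext i
    apply PNat.coe_injective
    show (S.orderEmbOfFin hcard i : ℕ) + 1 = (f.1 i : ℕ)
    rw [← congrFun huniq i]
    exact Nat.succ_pred_eq_of_pos (f.1 i).2

lemma MTV_eq_ee (d : ℕ) : MTV (List.replicate d 2) = ee d := by
  unfold MTV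
  simp only [List.get_eq_getElem, List.getElem_replicate]
  rw [List.length_replicate]
  set E : {S : Finset ℕ // S.card = d} ≃ {f : Fin d → ℕ+ // StrictMono f} :=
    Equiv.ofBijective (toSM d) (toSM_bijective d) with hEdef
  rw [← Equiv.tsum_eq E (fun f : {f : Fin d → ℕ+ // StrictMono f} =>
    ∏ i : Fin d, (1 : ℝ) / ((2 * (f.1 i : ℕ) - 1 : ℕ) : ℝ) ^ 2)]
  unfold ee
  apply tsum_congr
  intro S
  have hterm : ∀ i : Fin d,
      (1 : ℝ) / ((2 * ((toSM d S).1 i : ℕ) - 1 : ℕ) : ℝ) ^ 2 =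
        aa (S.1.orderEmbOfFin S.2 i) := by
    intro i
    have hval : ((toSM d S).1 i : ℕ) = S.1.orderEmbOfFin S.2 i + 1 := rfl
    rw [hval]
    have hnat : 2 * (S.1.orderEmbOfFin S.2 i + 1) - 1 = 2 * (S.1.orderEmbOfFin S.2 i) + 1 := by
      omega
    rw [hnat]
    unfold aa
    push_cast
    ring_nf
  have hE : E S = toSM d S := rfl
  rw [hE]
  rw [Finset.prod_congr rfl (fun i _ => hterm i)]
  -- now: ∏ i : Fin d, aa (orderEmbOfFin i) = ∏ k ∈ S, aa k
  have himg : (S : Finset ℕ) = Finset.image (fun i => S.1.orderEmbOfFin S.2 i) Finset.univ := by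
    apply Finset.coe_injective
    rw [Finset.coe_image, Finset.coe_univ, Set.image_univ, Finset.range_orderEmbOfFin]
  conv_rhs => rw [himg]
  rw [Finset.prod_image]
  intro i _ j _ hij
  exact (S.1.orderEmbOfFin S.2).injective hij

end Stmt5

theorem stmt_5 (d : ℕ) (hd : 0 < d) :
    MTV (List.replicate d 2) =
      Real.pi ^ (2 * d) / (2 ^ (2 * d) * (Nat.factorial (2 * d) : ℝ)) := by
  rw [Stmt5.MTV_eq_ee d, Stmt5.ee_eq_cc d]
  unfold Stmt5.cc
  rw [div_pow, div_div]
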